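/- arXiv:2010.08613 — 8 statements merged into one kernel-verified Lean document; each statement's English description precedes it below -/
import Mathlib

section
/- Let T be a Galton-Watson tree with offspring distribution p₀ = 1/2, p₁ = 0, p₂ = 1/2 (full binary critical GW tree). Then for every x ∈ ℕ, P{HS(T) = x} = 2^{-(x+1)}. -/
open scoped ENNReal

/-- Finite rooted ordered trees. -/
inductive RTree : Type where
  | node : List RTree → RTree

namespace RTree

/-- Number of nodes of a rooted tree. -/
def size : RTree → ℕ
  | node ts => 1 + (ts.attach.map (fun x => size x.1)).sum
decreasing_by simp only [RTree.node.sizeOf_spec]; have := List.sizeOf_lt_of_mem x.2; omega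

/-- The (standard) Horton-Strahler number: `0` at leaves; at an internal node, the
maximum of the children's values, plus one if the maximum is attained at least twice. -/
def HS : RTree → ℕ
  | node ts =>
    let vals := ts.attach.map (fun x => HS x.1)
    let m := vals.foldr max 0
    m + (if 2 ≤ (vals.filter (fun v => v == m)).length then 1 else 0)
decreasing_by simp only [RTree.node.sizeOf_spec]; have := List.sizeOf_lt_of_mem x.2; omega

/-- The French Horton-Strahler number: with children values sorted decreasingly as
`v₁ ≥ v₂ ≥ ⋯ ≥ v_k`, it equals `max_i (v_i + (i-1))`. -/
def Fr : RTree → ℕ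
  | node ts =>
    let vals := (ts.attach.map (fun x => Fr x.1)).mergeSort (fun a b => decide (b ≤ a))
    (vals.zipIdx.map (fun p => p.1 + p.2)).foldr max 0
decreasing_by simp only [RTree.node.sizeOf_spec]; have := List.sizeOf_lt_of_mem x.2; omega

/-- The Canadian Horton-Strahler number: `v₁ + (r - 1)` where `r` is the number of
children attaining the maximal value `v₁`. -/
def Can : RTree → ℕ
  | node ts =>
    let vals := ts.attach.map (fun x => Can x.1)
    let m := vals.foldr max 0
    if vals.length = 0 then 0
    else m + ((vals.filter (fun v => v == m)).length - 1)
decreasing_by simp only [RTree.node.sizeOf_spec]; have := List.sizeOf_lt_of_mem x.2; omega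

/-- The rigid Horton-Strahler number: max of children's values, plus one if the node has
at least two children and all children attain the maximum. -/
def Rig : RTree → ℕ
  | node ts =>
    let vals := ts.attach.map (fun x => Rig x.1)
    let m := vals.foldr max 0
    if vals.length ≤ 1 then m
    else m + (if vals.all (fun v => v == m) then 1 else 0)
decreasing_by simp only [RTree.node.sizeOf_spec]; have := List.sizeOf_lt_of_mem x.2; omega

/-- The `k`-ary register function: with children values sorted decreasingly as
`𝒦₁ ≥ ⋯ ≥ 𝒦_ℓ`, it equals `max {𝒦₁, 𝒦_k + 1}` if `ℓ ≥ k` and `𝒦₁` otherwise. -/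
def Kreg (k : ℕ) : RTree → ℕ
  | node ts =>
    let vals := (ts.attach.map (fun x => Kreg k x.1)).mergeSort (fun a b => decide (b ≤ a))
    if k ≤ vals.length then max (vals.headD 0) (vals.getD (k - 1) 0 + 1)
    else vals.headD 0
decreasing_by simp only [RTree.node.sizeOf_spec]; have := List.sizeOf_lt_of_mem x.2; omega

/-- The Galton-Watson weight of a finite tree: the product over all nodes of the
offspring probability of the node's number of children.  For an offspring distribution
`p` summing to one, `∑' t with property P, gwWeight p t` is the probability that the
(almost surely finite) Galton-Watson tree satisfies `P`. -/
noncomputable def gwWeight (p : ℕ → ℝ≥0∞) : RTree → ℝ≥0∞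
  | node ts => p ts.length * (ts.attach.map (fun x => gwWeight p x.1)).prod
decreasing_by simp only [RTree.node.sizeOf_spec]; have := List.sizeOf_lt_of_mem x.2; omega

/-- The preorder degree sequence of a tree. -/
def degSeq : RTree → List ℕ
  | node ts => ts.length :: (ts.attach.map (fun x => degSeq x.1)).flatten
decreasing_by simp only [RTree.node.sizeOf_spec]; have := List.sizeOf_lt_of_mem x.2; omega

/-- Maximal number of children of any node in the tree. -/
def maxDeg : RTree → ℕ
  | node ts => max ts.length ((ts.attach.map (fun x => maxDeg x.1)).foldr max 0)
decreasing_by simp only [RTree.node.sizeOf_spec]; have := List.sizeOf_lt_of_mem x.2; omega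

/-- `EmbedsCBT h T`: a complete binary tree of height `h` embeds (in the topological
minor sense) into `T`. -/
inductive EmbedsCBT : ℕ → RTree → Prop where
  | zero (t : RTree) : EmbedsCBT 0 t
  | child (h : ℕ) (ts : List RTree) (t : RTree) (ht : t ∈ ts) (he : EmbedsCBT h t) :
      EmbedsCBT h (.node ts)
  | split (h : ℕ) (ts : List RTree) (i j : Fin ts.length) (hij : i ≠ j)
      (hi : EmbedsCBT h ts[i]) (hj : EmbedsCBT h ts[j]) :
      EmbedsCBT (h + 1) (.node ts)

/-- `EmbedsCKT k h T`: a complete `k`-ary tree of height `h` embeds into `T`. -/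
inductive EmbedsCKT (k : ℕ) : ℕ → RTree → Prop where
  | zero (t : RTree) : EmbedsCKT k 0 t
  | child (h : ℕ) (ts : List RTree) (t : RTree) (ht : t ∈ ts) (he : EmbedsCKT k h t) :
      EmbedsCKT k h (.node ts)
  | split (h : ℕ) (ts : List RTree) (s : Finset (Fin ts.length)) (hcard : s.card = k)
      (hall : ∀ i ∈ s, EmbedsCKT k h ts[i]) :
      EmbedsCKT k (h + 1) (.node ts)

end RTree


namespace HSAux
open RTree

lemma auxmax (m n : ℕ) :
    (m ⊔ (n ⊔ 0) + if 2 ≤ (List.filter (fun v => v == m ⊔ (n ⊔ 0)) [m, n]).length then 1 else 0)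
      = max m n + (if m = n then 1 else 0) := by
  rw [Nat.max_zero]
  rcases Nat.lt_trichotomy m n with h | h | h
  · rw [Nat.max_eq_right h.le]
    simp [List.filter_cons, h.ne, Nat.ne_of_gt h]
  · subst h; simp [List.filter_cons]
  · rw [Nat.max_eq_left h.le]
    simp [List.filter_cons, h.ne, Nat.ne_of_gt h, h.ne']

lemma HS_node2 (a b : RTree) :
    HS (.node [a, b]) = max (HS a) (HS b) + (if HS a = HS b then 1 else 0) := by
  rw [HS]
  simp only [List.attach_cons, List.map_cons, List.map_map, List.attach_nil, List.map_nil,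
    List.foldr_cons, List.foldr_nil, Function.comp]
  exact auxmax _ _
end HSAux
namespace HSAux
open RTree

noncomputable def p : ℕ → ℝ≥0∞ := fun n => if n = 0 then (1/2 : ℝ≥0∞) else if n = 2 then 1/2 else 0
noncomputable def w : RTree → ℝ≥0∞ := gwWeight p

lemma w_leaf : w (.node []) = 1/2 := by simp [w, gwWeight, p]

lemma w_node2 (a b : RTree) : w (.node [a,b]) = 1/2 * (w a * w b) := by
  rw [w, gwWeight]
  simp [List.attach_cons, p, mul_assoc]

lemma w_other (l : List RTree) (h0 : l.length ≠ 0) (h2 : l.length ≠ 2) : w (.node l) = 0 := by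
  rw [w, gwWeight]
  simp [p, h0, h2]

def eqv : List RTree ≃ RTree where
  toFun := RTree.node
  invFun := fun t => match t with | .node l => l
  left_inv := fun l => rfl
  right_inv := fun t => by cases t; rfl

lemma decomp (F : RTree → ℝ≥0∞) (h : ∀ l : List RTree, l.length ≠ 0 → l.length ≠ 2 → F (.node l) = 0) :
    ∑' t, F t = F (.node []) + ∑' (a : RTree) (b : RTree), F (.node [a, b]) := by
  rw [← eqv.tsum_eq F]
  show (∑' l : List RTree, F (.node l)) = _
  rw [ENNReal.tsum_eq_add_tsum_ite ([] : List RTree)]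
  congr 1
  have hinj : Function.Injective (fun q : RTree × RTree => [q.1, q.2]) := by
    intro q r hqr
    simp only [List.cons.injEq, and_true] at hqr
    exact Prod.ext hqr.1 hqr.2
  rw [← hinj.tsum_eq, ENNReal.tsum_prod']
  · simp
  · intro l hl
    simp only [Function.mem_support, ne_eq, ite_eq_left_iff, not_forall] at hl
    obtain ⟨hne, hF⟩ := hl
    have h0 : l.length ≠ 0 := by simpa using hne
    have h2 : l.length = 2 := by
      by_contra h2
      exact hF (h l h0 h2)
    match l, h2 with
    | [a, b], _ => exact ⟨(a, b), rfl⟩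

end HSAux
namespace HSAux
open RTree

lemma size_pos (t : RTree) : 1 ≤ size t := by
  cases t with | node l => rw [size]; omega

lemma size_node2 (a b : RTree) : size (.node [a,b]) = 1 + size a + size b := by
  rw [size]
  simp [List.attach_cons]
  omega

noncomputable def T (n : ℕ) : ℝ≥0∞ := ∑' t : RTree, if size t ≤ n then w t else 0

lemma T_le_one (n : ℕ) : T n ≤ 1 := by
  induction n with
  | zero =>
    have : ∀ t : RTree, (if size t ≤ 0 then w t else 0) = 0 := by
      intro t
      rw [if_neg]
      have := size_pos t; omega
    rw [T]
    simp only [this, tsum_zero]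
    exact zero_le_one
  | succ n ih =>
    rw [T, decomp _ (fun l h0 h2 => by rw [w_other l h0 h2, ite_self])]
    have hle : (∑' (a : RTree) (b : RTree), if size (RTree.node [a, b]) ≤ n + 1 then w (.node [a,b]) else 0)
        ≤ 1/2 * (T n * T n) := by
      have hpt : ∀ a b : RTree, (if size (RTree.node [a, b]) ≤ n + 1 then w (.node [a,b]) else 0)
          ≤ 1/2 * ((if size a ≤ n then w a else 0) * (if size b ≤ n then w b else 0)) := by
        intro a b
        rw [size_node2, w_node2]
        have ha := size_pos a; have hb := size_pos b
        split_ifs with h h1 h2 <;> first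
          | exact le_refl _
          | exact zero_le
          | omega
      calc _ ≤ ∑' (a : RTree) (b : RTree), 1/2 * ((if size a ≤ n then w a else 0) * (if size b ≤ n then w b else 0)) :=
              ENNReal.tsum_le_tsum (fun a => ENNReal.tsum_le_tsum (fun b => hpt a b))
        _ = 1/2 * (T n * T n) := by
            rw [T]
            simp_rw [ENNReal.tsum_mul_left, ENNReal.tsum_mul_right]
    calc _ ≤ (if size (RTree.node []) ≤ n + 1 then w (.node []) else 0) + 1/2 * (T n * T n) :=
            add_le_add_right hle _
      _ ≤ 1/2 + 1/2 * (1 * 1) := by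
          refine add_le_add ?_ ?_
          · rw [w_leaf]; split_ifs <;> simp
          · exact mul_le_mul_right (mul_le_mul' ih ih) _
      _ = 1 := by rw [one_mul, mul_one, ENNReal.add_halves]

lemma w_total_le_one : (∑' t : RTree, w t) ≤ 1 := by
  rw [ENNReal.tsum_eq_iSup_sum]
  refine iSup_le fun s => ?_
  set n := s.sup size with hn
  calc (∑ t ∈ s, w t) = ∑ t ∈ s, (if size t ≤ n then w t else 0) := by
        refine Finset.sum_congr rfl fun t ht => ?_
        rw [if_pos (Finset.le_sup ht)]
    _ ≤ T n := ENNReal.sum_le_tsum s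
    _ ≤ 1 := T_le_one n

end HSAux
namespace HSAux
open RTree

lemma HS_leaf : HS (.node []) = 0 := by simp [HS]

noncomputable def A (x : ℕ) : ℝ≥0∞ := ∑' t : RTree, if HS t = x then w t else 0
noncomputable def B (x : ℕ) : ℝ≥0∞ := ∑' t : RTree, if HS t < x then w t else 0

lemma A_le_one (x : ℕ) : A x ≤ 1 :=
  le_trans (ENNReal.tsum_le_tsum (fun t => by split_ifs <;> simp)) w_total_le_one

lemma B_le_one (x : ℕ) : B x ≤ 1 :=
  le_trans (ENNReal.tsum_le_tsum (fun t => by split_ifs <;> simp)) w_total_le_one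

lemma half_add_half : (1/2 : ℝ≥0∞) + 1/2 = 1 := ENNReal.add_halves 1

lemma B_eq_sum (x : ℕ) : B x = ∑ y ∈ Finset.range x, A y := by
  rw [B]
  have hpt : ∀ t : RTree, (if HS t < x then w t else 0)
      = ∑ y ∈ Finset.range x, (if HS t = y then w t else 0) := by
    intro t
    rw [Finset.sum_ite_eq (Finset.range x) (HS t) (fun _ => w t)]
    simp [Finset.mem_range]
  simp_rw [hpt]
  exact Summable.tsum_finsetSum fun i _ => ENNReal.summable

lemma A_zero : A 0 = 1/2 := by
  rw [A, decomp _ (fun l h0 h2 => by rw [w_other l h0 h2, ite_self])]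
  have h1 : ∀ a b : RTree, HS (.node [a, b]) ≠ 0 := by
    intro a b
    rw [HS_node2]
    rcases eq_or_ne (HS a) (HS b) with h | h
    · rw [if_pos h]; omega
    · simp only [h, if_false]
      omega
  simp [HS_leaf, w_leaf, h1]

lemma A_succ (y : ℕ) : A (y+1) = A (y+1) * B (y+1) + 1/2 * (A y * A y) := by
  have hpt : ∀ a b : RTree, (if HS (.node [a, b]) = y+1 then w (.node [a,b]) else 0)
      = 1/2*((if HS a = y+1 then w a else 0) * (if HS b < y+1 then w b else 0))
      + 1/2*((if HS a < y+1 then w a else 0) * (if HS b = y+1 then w b else 0))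
      + 1/2*((if HS a = y then w a else 0) * (if HS b = y then w b else 0)) := by
    intro a b
    rw [HS_node2, w_node2]
    rcases Nat.lt_trichotomy (HS a) (HS b) with h | h | h
    · rw [Nat.max_eq_right h.le, if_neg h.ne]
      split_ifs <;> first | omega | (exfalso; omega) | ring | simp
    · rw [h, Nat.max_self, if_pos rfl]
      split_ifs <;> first | omega | ring | simp
    · rw [Nat.max_eq_left h.le, if_neg h.ne']
      split_ifs <;> first | omega | ring | simp
  conv_lhs =>
    rw [A, decomp _ (fun l h0 h2 => by rw [w_other l h0 h2, ite_self])]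
  simp_rw [hpt, ENNReal.tsum_add, ENNReal.tsum_mul_left, ENNReal.tsum_mul_right]
  rw [HS_leaf]
  simp only [Nat.zero_ne_add_one, if_false, zero_add]
  show 1/2 * (A (y+1) * B (y+1)) + 1/2 * (B (y+1) * A (y+1)) + 1/2 * (A y * A y) = _
  rw [mul_comm (B (y+1)) (A (y+1)), ← add_mul, half_add_half, one_mul]

lemma geom (x : ℕ) : (∑ y ∈ Finset.range x, (1/2:ℝ≥0∞)^(y+1)) + (1/2)^x = 1 := by
  induction x with
  | zero => simp
  | succ n ih =>
    have hh : (1/2:ℝ≥0∞)^(n+1) + (1/2)^(n+1) = (1/2)^n := by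
      rw [pow_succ, ← mul_add, half_add_half, mul_one]
    rw [Finset.sum_range_succ, add_assoc, hh, ih]

lemma A_eq (x : ℕ) : A x = (1/2 : ℝ≥0∞)^(x+1) := by
  induction x using Nat.strong_induction_on with
  | _ x ih =>
    match x with
    | 0 => rw [A_zero, pow_one]
    | y + 1 =>
      have hB : B (y+1) + (1/2 : ℝ≥0∞)^(y+1) = 1 := by
        rw [B_eq_sum]
        rw [Finset.sum_congr rfl (fun z hz => ih z (Finset.mem_range.mp hz))]
        exact geom (y+1)
      have hfin : A (y+1) * B (y+1) ≠ ⊤ :=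
        (lt_of_le_of_lt (mul_le_one' (A_le_one _) (B_le_one _)) ENNReal.one_lt_top).ne
      have hrec := A_succ y
      rw [ih y (Nat.lt_succ_self y)] at hrec
      have h2 : A (y+1) * B (y+1) + A (y+1) * (1/2 : ℝ≥0∞)^(y+1) = A (y+1) := by
        rw [← mul_add, hB, mul_one]
      have h3 : A (y+1) * (1/2 : ℝ≥0∞)^(y+1) = 1/2 * ((1/2)^(y+1) * (1/2)^(y+1)) :=
        (ENNReal.add_right_inj hfin).mp (h2.trans hrec)
      have hmul : ((1/2 : ℝ≥0∞))^(y+1) * 2^(y+1) = 1 := by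
        rw [← mul_pow, one_div, ENNReal.inv_mul_cancel two_ne_zero ENNReal.ofNat_ne_top, one_pow]
      calc A (y+1) = A (y+1) * ((1/2 : ℝ≥0∞)^(y+1) * 2^(y+1)) := by rw [hmul, mul_one]
        _ = (A (y+1) * (1/2 : ℝ≥0∞)^(y+1)) * 2^(y+1) := by ring
        _ = (1/2 * ((1/2 : ℝ≥0∞)^(y+1) * (1/2)^(y+1))) * 2^(y+1) := by rw [h3]
        _ = (1/2 : ℝ≥0∞)^(y+1) * ((1/2 : ℝ≥0∞)^(y+1) * 2^(y+1)) * (1/2) := by ring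
        _ = (1/2 : ℝ≥0∞)^(y+1) * (1/2) := by rw [hmul, mul_one]
        _ = (1/2 : ℝ≥0∞)^(y+1+1) := (pow_succ _ _).symm

end HSAux
/-- For a Galton-Watson tree with offspring distribution
`p₀ = 1/2, p₁ = 0, p₂ = 1/2`, for every `x ∈ ℕ`, `P{HS(T) = x} = 2^{-(x+1)}`. -/
theorem hs_full_binary_gw (x : ℕ) :
    (∑' t : RTree, if RTree.HS t = x then
        RTree.gwWeight (fun n => if n = 0 then (1/2 : ℝ≥0∞) else if n = 2 then 1/2 else 0) t
      else 0) = (1/2 : ℝ≥0∞) ^ (x + 1) := HSAux.A_eq x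
end

section
/- If a sequence q : ℕ → ℝ of nonnegative reals with q_i ≤ q_{i-1}²/(2 q_i⁺) for all i ≥ 1, where q_i⁺ = Σ_{k≥i} q_k (assumed positive and finite), then q_i is monotonically decreasing and q_i ≤ q₀ / 2^{i/2} for all i ≥ 0. -/
set_option maxHeartbeats 1000000


open scoped ENNReal

/-- A nonnegative sequence with `q_i ≤ q_{i-1}²/(2 q_i⁺)` for `i ≥ 1`
(with `q_i⁺ = Σ_{k ≥ i} q_k` positive and finite) is monotonically decreasing and
satisfies `q_i ≤ q₀/2^{i/2}`. -/
theorem hs_tail_decay_abstract (q : ℕ → ℝ) (hq : ∀ i, 0 ≤ q i) (hsum : Summable q)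
    (hpos : ∀ i, 0 < ∑' k, q (i + k))
    (hrec : ∀ i, 1 ≤ i → q i ≤ (q (i - 1)) ^ 2 / (2 * ∑' k, q (i + k))) :
    Antitone q ∧ ∀ i : ℕ, q i ≤ q 0 / (2 : ℝ) ^ ((i : ℝ) / 2) := by
  -- Key inequality: `2 q_{i+1}^2 ≤ q_i^2`.
  have key : ∀ i : ℕ, 2 * (q (i + 1)) ^ 2 ≤ (q i) ^ 2 := by
    intro i
    have hQpos : 0 < ∑' k, q (i + 1 + k) := hpos (i + 1)
    have h1 : q (i + 1) ≤ (q i) ^ 2 / (2 * ∑' k, q (i + 1 + k)) := by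
      simpa using hrec (i + 1) (by omega)
    have h2 : q (i + 1) * (2 * ∑' k, q (i + 1 + k)) ≤ (q i) ^ 2 :=
      (le_div_iff₀ (by positivity)).1 h1
    have hle : q (i + 1) ≤ ∑' k, q (i + 1 + k) := by
      have hs : Summable (fun k => q (i + 1 + k)) := by
        simpa [add_comm] using (summable_nat_add_iff (i + 1)).2 hsum
      have := Summable.le_tsum hs 0 (fun k _ => hq _)
      simpa using this
    calc 2 * (q (i + 1)) ^ 2 = q (i + 1) * (2 * q (i + 1)) := by ring
      _ ≤ q (i + 1) * (2 * ∑' k, q (i + 1 + k)) := by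
          apply mul_le_mul_of_nonneg_left _ (hq _)
          linarith
      _ ≤ (q i) ^ 2 := h2
  have hstep : ∀ i : ℕ, q (i + 1) ≤ q i := by
    intro i
    have := key i
    nlinarith [hq i, hq (i + 1)]
  constructor
  · exact antitone_nat_of_succ_le hstep
  · intro i
    induction i with
    | zero => simp
    | succ n ih =>
      have hpow : (0:ℝ) < (2 : ℝ) ^ ((n : ℝ) / 2) := by positivity
      have hsqrt : (0:ℝ) < Real.sqrt 2 := by positivity
      have hstep2 : q (n + 1) * Real.sqrt 2 ≤ q n := by
        have h := key n
        have h2 : (q (n + 1) * Real.sqrt 2) ^ 2 ≤ (q n) ^ 2 := by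
          have : Real.sqrt 2 ^ 2 = 2 := Real.sq_sqrt (by norm_num)
          nlinarith
        have he : q (n + 1) * Real.sqrt 2 = Real.sqrt ((q (n + 1) * Real.sqrt 2) ^ 2) :=
          (Real.sqrt_sq (mul_nonneg (hq _) hsqrt.le)).symm
        rw [he, ← Real.sqrt_sq (hq n)]
        exact Real.sqrt_le_sqrt h2
      have hexp : (((n + 1 : ℕ)) : ℝ) / 2 = (n : ℝ) / 2 + 1 / 2 := by push_cast; ring
      have hrw : (2:ℝ) ^ ((((n + 1 : ℕ)) : ℝ) / 2) = (2:ℝ) ^ ((n : ℝ) / 2) * Real.sqrt 2 := by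
        rw [hexp, Real.rpow_add (by norm_num : (0:ℝ) < 2), Real.sqrt_eq_rpow]
      have h1 : q (n + 1) * ((2:ℝ) ^ ((n : ℝ) / 2) * Real.sqrt 2) ≤ q 0 := by
        calc q (n + 1) * ((2:ℝ) ^ ((n : ℝ) / 2) * Real.sqrt 2)
            = q (n + 1) * Real.sqrt 2 * (2:ℝ) ^ ((n : ℝ) / 2) := by ring
          _ ≤ q n * (2:ℝ) ^ ((n : ℝ) / 2) := mul_le_mul_of_nonneg_right hstep2 hpow.le
          _ ≤ q 0 := (le_div_iff₀ hpow).1 ih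
      rw [hrw]
      exact (le_div_iff₀ (by positivity)).2 h1
end

section
/- For any rooted tree T, the four Horton-Strahler variants are ordered: Fr(T) ≥ Can(T) ≥ HS(T) ≥ Rig(T). -/
open scoped ENNReal

open List

namespace HSAux

lemma le_fold_max {l : List ℕ} {x : ℕ} (hx : x ∈ l) : x ≤ l.foldr max 0 := by
  induction l with
  | nil => simp at hx
  | cons a t ih =>
    rcases mem_cons.1 hx with rfl | h
    · exact le_max_left _ _
    · exact (ih h).trans (le_max_right _ _)

lemma fold_max_mem {l : List ℕ} (h : l ≠ []) : l.foldr max 0 ∈ l := by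
  induction l with
  | nil => simp at h
  | cons a t ih =>
    rcases eq_or_ne t [] with rfl | ht
    · simp
    · rcases le_total (t.foldr max 0) a with hle | hle
      · simp [max_eq_left hle]
      · rw [foldr_cons, max_eq_right hle]; exact mem_cons_of_mem _ (ih ht)

lemma fold_max_le {a b : List ℕ} (h : Forall₂ (· ≤ ·) a b) :
    a.foldr max 0 ≤ b.foldr max 0 := by
  induction h with
  | nil => simp
  | cons hxy _ ih => exact max_le_max hxy ih

lemma countP_le_of_forall₂ {a b : List ℕ} (m : ℕ) (h : Forall₂ (· ≤ ·) a b) :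
    a.countP (fun x => decide (m ≤ x)) ≤ b.countP (fun x => decide (m ≤ x)) := by
  induction h with
  | nil => simp
  | @cons x y a b hxy h ih =>
    rw [countP_cons, countP_cons]
    have : (if decide (m ≤ x) = true then 1 else 0) ≤ (if decide (m ≤ y) = true then 1 else 0) := by
      split <;> split <;> simp_all <;> omega
    omega

lemma exists_of_forall₂ {R : ℕ → ℕ → Prop} {a b : List ℕ} (h : Forall₂ R a b) {y : ℕ}
    (hy : y ∈ b) : ∃ x ∈ a, R x y := by
  induction h with
  | nil => simp at hy
  | @cons x y' a b hxy h ih =>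
    rcases mem_cons.1 hy with rfl | h'
    · exact ⟨x, by simp, hxy⟩
    · obtain ⟨x', hx', hr⟩ := ih h'
      exact ⟨x', mem_cons_of_mem _ hx', hr⟩

lemma sorted_get_ge {s : List ℕ} (hs : s.Pairwise (fun a b => b ≤ a)) {m r : ℕ}
    (hr : 1 ≤ r) (hc : r ≤ s.countP (fun x => decide (m ≤ x))) (hlen : r - 1 < s.length) :
    m ≤ s[r-1] := by
  induction s generalizing r with
  | nil => simp at hlen
  | cons x t ih =>
    rcases eq_or_lt_of_le hr with h1 | hr2
    · have : 0 < (x :: t).countP (fun x => decide (m ≤ x)) := by omega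
      obtain ⟨y, hy, hmy⟩ := countP_pos_iff.1 this
      simp only [decide_eq_true_eq] at hmy
      have hyx : y ≤ x := by
        rcases mem_cons.1 hy with rfl | hyt
        · exact le_rfl
        · exact (pairwise_cons.1 hs).1 y hyt
      subst h1
      simpa using hmy.trans hyx
    · obtain ⟨r', rfl⟩ : ∃ r', r = r' + 2 := ⟨r - 2, by omega⟩
      have hct : r' + 1 ≤ t.countP (fun x => decide (m ≤ x)) := by
        rw [countP_cons] at hc
        split at hc <;> omega
      have hlent : r' + 1 - 1 < t.length := by
        have := countP_le_length (l := t) (p := fun x => decide (m ≤ x))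
        omega
      have := ih (pairwise_cons.1 hs).2 (by omega) hct hlent
      simpa using this

lemma fr_ge {s : List ℕ} {i : ℕ} (hi : i < s.length) :
    s[i] + i ≤ (s.zipIdx.map (fun p => p.1 + p.2)).foldr max 0 := by
  apply le_fold_max
  apply mem_map.2
  refine ⟨(s[i], i), ?_, rfl⟩
  exact mem_zipIdx_iff_getElem?.2 (by simp [hi])

lemma fr_bound (b : List ℕ) {m r : ℕ} (hr : 1 ≤ r)
    (hc : r ≤ b.countP (fun x => decide (m ≤ x))) :
    m + (r - 1) ≤
      (((b.mergeSort (fun a b => decide (b ≤ a))).zipIdx.map (fun p => p.1 + p.2)).foldr max 0) := by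
  set s := b.mergeSort (fun a b => decide (b ≤ a)) with hsdef
  have hperm : s ~ b := mergeSort_perm b _
  have hcs : r ≤ s.countP (fun x => decide (m ≤ x)) := by rw [hperm.countP_eq]; exact hc
  have hlen : r - 1 < s.length := by
    have := countP_le_length (l := s) (p := fun x => decide (m ≤ x))
    omega
  have hsort : s.Pairwise (fun a b => b ≤ a) := by
    have := pairwise_mergeSort (le := fun a b : ℕ => decide (b ≤ a))
      (fun a b c hab hbc => by simp_all; omega)
      (fun a b => by simp [Nat.le_total b a]) b
    simpa using this
  have h1 := sorted_get_ge hsort hr hcs hlen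
  have h2 := fr_ge hlen
  omega

lemma cnt_eq (l : List ℕ) (m : ℕ) :
    (l.filter (fun v => v == m)).length = l.countP (fun v => v == m) :=
  countP_eq_length_filter.symm

lemma cnt_le_countP_ge (l : List ℕ) (m : ℕ) :
    l.countP (fun v => v == m) ≤ l.countP (fun x => decide (m ≤ x)) := by
  apply countP_mono_left
  intro a _ ha
  simp_all

lemma rig_le_hs_list {a b : List ℕ} (h : Forall₂ (· ≤ ·) a b) :
    (if a.length ≤ 1 then a.foldr max 0
     else a.foldr max 0 + (if a.all (fun v => v == a.foldr max 0) then 1 else 0))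
    ≤ b.foldr max 0 + (if 2 ≤ (b.filter (fun v => v == b.foldr max 0)).length then 1 else 0) := by
  have hm : a.foldr max 0 ≤ b.foldr max 0 := fold_max_le h
  have hlen := h.length_eq
  split
  · exact hm.trans (Nat.le_add_right _ _)
  · rename_i hlen2
    split
    · rename_i hall
      split
      · omega
      · rename_i hcnt
        -- show strict: a.foldr max 0 < b.foldr max 0
        rcases lt_or_eq_of_le hm with hlt | heq
        · omega
        · exfalso
          have hball : ∀ y ∈ b, y = b.foldr max 0 := by
            intro y hy
            obtain ⟨x, hx, hxy⟩ := exists_of_forall₂ h hy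
            have hxa : x = a.foldr max 0 := by
              have := (all_eq_true.1 hall) x hx
              simpa using this
            have h1 : b.foldr max 0 ≤ y := by rw [← heq, ← hxa]; exact hxy
            have h2 : y ≤ b.foldr max 0 := le_fold_max hy
            omega
          have : b.filter (fun v => v == b.foldr max 0) = b := by
            apply filter_eq_self.2
            intro y hy
            simp [hball y hy]
          rw [this] at hcnt
          omega
    · omega

lemma hs_le_can_list {a b : List ℕ} (h : Forall₂ (· ≤ ·) a b) :
    a.foldr max 0 + (if 2 ≤ (a.filter (fun v => v == a.foldr max 0)).length then 1 else 0)
    ≤ if b.length = 0 then 0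
      else b.foldr max 0 + ((b.filter (fun v => v == b.foldr max 0)).length - 1) := by
  have hm : a.foldr max 0 ≤ b.foldr max 0 := fold_max_le h
  have hlen := h.length_eq
  rcases Nat.eq_zero_or_pos b.length with hb0 | hbpos
  · rw [if_pos hb0]
    have hb : b = [] := length_eq_zero_iff.1 hb0
    subst hb
    cases h
    simp
  · rw [if_neg (show ¬ b.length = 0 by omega)]
    have hbne : b ≠ [] := by
      intro hb; subst hb; simp at hbpos
    have hcb1 : 1 ≤ (b.filter (fun v => v == b.foldr max 0)).length := by
      show 0 < _
      exact length_pos_of_mem (mem_filter.2 ⟨fold_max_mem hbne, by simp⟩)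
    by_cases hcnt2 : 2 ≤ (a.filter (fun v => v == a.foldr max 0)).length
    · rw [if_pos hcnt2]
      rcases lt_or_eq_of_le hm with hlt | heq
      · omega
      · have key : 2 ≤ b.countP (fun x => decide (a.foldr max 0 ≤ x)) := by
          have h1 : 2 ≤ a.countP (fun v => v == a.foldr max 0) := by rw [← cnt_eq]; exact hcnt2
          have h2 := cnt_le_countP_ge a (a.foldr max 0)
          have h3 := countP_le_of_forall₂ (a.foldr max 0) h
          omega
        have key2 : b.countP (fun x => decide (a.foldr max 0 ≤ x))
            ≤ b.countP (fun v => v == b.foldr max 0) := by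
          apply countP_mono_left
          intro y hy hya
          have := le_fold_max hy
          simp only [decide_eq_true_eq] at hya
          simp only [beq_iff_eq]
          omega
        have hce := cnt_eq b (b.foldr max 0)
        omega
    · rw [if_neg hcnt2]
      omega

lemma can_le_fr_list {a b : List ℕ} (h : Forall₂ (· ≤ ·) a b) :
    (if a.length = 0 then 0
     else a.foldr max 0 + ((a.filter (fun v => v == a.foldr max 0)).length - 1))
    ≤ (((b.mergeSort (fun x y => decide (y ≤ x))).zipIdx.map (fun p => p.1 + p.2)).foldr max 0) := by
  split
  · exact Nat.zero_le _
  · rename_i ha0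
    have hane : a ≠ [] := by cases a <;> simp_all
    set m := a.foldr max 0 with hmdef
    set r := (a.filter (fun v => v == m)).length with hrdef
    have hr1 : 1 ≤ r := by
      rw [hrdef]
      show 0 < _
      exact length_pos_of_mem (mem_filter.2 ⟨fold_max_mem hane, by simp [hmdef]⟩)
    have hc : r ≤ b.countP (fun x => decide (m ≤ x)) := by
      have h1 : r ≤ a.countP (fun x => decide (m ≤ x)) := by
        rw [hrdef, cnt_eq]; exact cnt_le_countP_ge a m
      exact h1.trans (countP_le_of_forall₂ m h)
    exact fr_bound b hr1 hc

lemma forall₂_map_le {f g : RTree → ℕ} {ts : List RTree} (h : ∀ t ∈ ts, f t ≤ g t) :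
    Forall₂ (· ≤ ·) (ts.map f) (ts.map g) := by
  induction ts with
  | nil => exact Forall₂.nil
  | cons x l ih =>
    exact Forall₂.cons (h x (by simp)) (ih fun t ht => h t (by simp [ht]))

lemma strongInd {motive : RTree → Prop}
    (h : ∀ ts : List RTree, (∀ t ∈ ts, motive t) → motive (.node ts)) :
    ∀ T, motive T
  | .node ts => h ts (fun t ht => strongInd h t)
decreasing_by simp only [RTree.node.sizeOf_spec]; have := List.sizeOf_lt_of_mem ht; omega

end HSAux

/-- For any rooted tree `T`, `Fr(T) ≥ Can(T) ≥ HS(T) ≥ Rig(T)`. -/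
theorem hs_variants_ordered (T : RTree) :
    T.Can ≤ T.Fr ∧ T.HS ≤ T.Can ∧ T.Rig ≤ T.HS := by
  induction T using HSAux.strongInd with
  | _ ts IH =>
    have IH1 : List.Forall₂ (· ≤ ·) (ts.map RTree.Can) (ts.map RTree.Fr) :=
      HSAux.forall₂_map_le (fun t ht => (IH t ht).1)
    have IH2 : List.Forall₂ (· ≤ ·) (ts.map RTree.HS) (ts.map RTree.Can) :=
      HSAux.forall₂_map_le (fun t ht => (IH t ht).2.1)
    have IH3 : List.Forall₂ (· ≤ ·) (ts.map RTree.Rig) (ts.map RTree.HS) :=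
      HSAux.forall₂_map_le (fun t ht => (IH t ht).2.2)
    simp only [RTree.Can, RTree.Fr, RTree.HS, RTree.Rig, List.attach_map_val]
    refine ⟨?_, ?_, ?_⟩
    · exact HSAux.can_le_fr_list IH1
    · exact HSAux.hs_le_can_list IH2
    · exact HSAux.rig_le_hs_list IH3
end

section
/- The Horton-Strahler number of a rooted tree T equals the height of the largest complete binary tree that admits a (topological-minor style) embedding into T. -/
open scoped ENNReal

namespace RTree

lemma le_foldr_max {l : List ℕ} {a : ℕ} (ha : a ∈ l) : a ≤ l.foldr max 0 := by
  induction l with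
  | nil => cases ha
  | cons b l ih =>
    rcases List.mem_cons.mp ha with rfl | h
    · exact le_max_left _ _
    · exact le_trans (ih h) (le_max_right _ _)

lemma foldr_max_mem {l : List ℕ} (hl : l ≠ []) : l.foldr max 0 ∈ l := by
  induction l with
  | nil => exact absurd rfl hl
  | cons b l ih =>
    rcases eq_or_ne l [] with rfl | h
    · simp
    · rcases max_cases b (l.foldr max 0) with ⟨he, _⟩ | ⟨he, _⟩
      · simpa [he] using Or.inl rfl
      · exact List.mem_cons.mpr (Or.inr (by rw [List.foldr_cons, he]; exact ih h))

lemma vals_eq (ts : List RTree) : ts.attach.map (fun x => HS x.1) = ts.map HS :=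
  List.attach_map_val (l := ts) (f := HS)

lemma hs_node (ts : List RTree) :
    HS (.node ts) = (ts.map HS).foldr max 0 +
      (if 2 ≤ ((ts.map HS).filter (fun v => v == (ts.map HS).foldr max 0)).length then 1 else 0) := by
  rw [HS]
  simp only [vals_eq]

lemma hs_child_le {ts : List RTree} {t : RTree} (ht : t ∈ ts) : HS t ≤ HS (.node ts) := by
  rw [hs_node]
  exact le_trans (le_foldr_max (List.mem_map_of_mem (f := HS) ht)) (Nat.le_add_right _ _)

theorem embeds_hs (T : RTree) : EmbedsCBT T.HS T := by
  obtain ⟨ts⟩ := T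
  rw [hs_node]
  set m := (ts.map HS).foldr max 0 with hm
  by_cases h2 : 2 ≤ ((ts.map HS).filter (fun v => v == m)).length
  · simp only [h2, if_pos]
    have hdup : List.Duplicate m (ts.map HS) := by
      rw [List.duplicate_iff_two_le_count, List.count, List.countP_eq_length_filter]
      exact h2
    obtain ⟨i, j, hij, hi, hj⟩ := List.duplicate_iff_exists_distinct_get.mp hdup
    have hlen : (ts.map HS).length = ts.length := List.length_map _
    have hi' : HS (ts[(Fin.cast hlen i)]) = m := by
      have := hi; rw [List.get_eq_getElem, List.getElem_map] at this
      simpa using this.symm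
    have hj' : HS (ts[(Fin.cast hlen j)]) = m := by
      have := hj; rw [List.get_eq_getElem, List.getElem_map] at this
      simpa using this.symm
    have hmem1 : ts[(Fin.cast hlen i)] ∈ ts := List.getElem_mem _
    have hmem2 : ts[(Fin.cast hlen j)] ∈ ts := List.getElem_mem _
    have e1 : EmbedsCBT (HS ts[(Fin.cast hlen i)]) ts[(Fin.cast hlen i)] := embeds_hs _
    have e2 : EmbedsCBT (HS ts[(Fin.cast hlen j)]) ts[(Fin.cast hlen j)] := embeds_hs _
    refine EmbedsCBT.split m ts (Fin.cast hlen i) (Fin.cast hlen j) ?_ ?_ ?_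
    · intro hh; exact Fin.ne_of_lt hij (Fin.ext (by simpa using congrArg Fin.val hh))
    · exact hi' ▸ e1
    · exact hj' ▸ e2
  · simp only [h2, if_neg, Nat.add_zero, if_false]
    rcases eq_or_ne ts [] with rfl | hne
    · have : m = 0 := by simp [hm]
      rw [this]; exact EmbedsCBT.zero _
    · have : m ∈ ts.map HS := foldr_max_mem (by simpa using hne)
      obtain ⟨t, ht, hmt⟩ := List.mem_map.mp this
      refine EmbedsCBT.child m ts t ht ?_
      rw [← hmt]; exact embeds_hs t
termination_by sizeOf T
decreasing_by
  all_goals simp only [RTree.node.sizeOf_spec]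
  all_goals (try have h1 := List.sizeOf_lt_of_mem hmem1) <;>
    (try have h2 := List.sizeOf_lt_of_mem hmem2) <;>
    (try have h3 := List.sizeOf_lt_of_mem ht) <;> omega

theorem embeds_le_hs {h : ℕ} {T : RTree} (he : EmbedsCBT h T) : h ≤ T.HS := by
  induction he with
  | zero t => exact Nat.zero_le _
  | child h ts t ht he ih => exact le_trans ih (hs_child_le ht)
  | split h ts i j hij hi hj ihi ihj =>
    rw [hs_node]
    set m := (ts.map HS).foldr max 0 with hm
    have hmi : HS ts[i] ≤ m := le_foldr_max (by
      exact List.mem_map_of_mem (f := HS) (List.getElem_mem _))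
    rcases lt_or_eq_of_le (le_trans ihi hmi) with hlt | heq
    · omega
    · have hieq : HS ts[i] = m := le_antisymm hmi (heq ▸ ihi)
      have hmj : HS ts[j] ≤ m := le_foldr_max (List.mem_map_of_mem (f := HS) (List.getElem_mem _))
      have hjeq : HS ts[j] = m := le_antisymm hmj (heq ▸ ihj)
      have hdup : List.Duplicate m (ts.map HS) := by
        rw [List.duplicate_iff_exists_distinct_get]
        have hlen : ts.length = (ts.map HS).length := (List.length_map _).symm
        rcases lt_or_gt_of_ne (fun hh => hij (Fin.ext hh) : (i:ℕ) ≠ j) with hlt | hlt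
        · exact ⟨Fin.cast hlen i, Fin.cast hlen j, hlt,
            by simp only [List.get_eq_getElem, Fin.coe_cast, List.getElem_map]; exact hieq.symm,
            by simp only [List.get_eq_getElem, Fin.coe_cast, List.getElem_map]; exact hjeq.symm⟩
        · exact ⟨Fin.cast hlen j, Fin.cast hlen i, hlt,
            by simp only [List.get_eq_getElem, Fin.coe_cast, List.getElem_map]; exact hjeq.symm,
            by simp only [List.get_eq_getElem, Fin.coe_cast, List.getElem_map]; exact hieq.symm⟩
      have h2 : 2 ≤ ((ts.map HS).filter (fun v => v == m)).length := by
        have := List.duplicate_iff_two_le_count.mp hdup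
        rwa [List.count, List.countP_eq_length_filter] at this
      rw [if_pos h2]
      omega

end RTree

/-- The Horton-Strahler number of a rooted tree `T` equals the height of
the largest complete binary tree that embeds into `T`. -/
theorem hs_eq_max_embedded_cbt (T : RTree) :
    RTree.EmbedsCBT T.HS T ∧ ∀ h : ℕ, RTree.EmbedsCBT h T → h ≤ T.HS :=
  ⟨RTree.embeds_hs T, fun _ he => RTree.embeds_le_hs he⟩
end

section
/- Let ξ be an offspring distribution with mean 1 and variance σ² ∈ (0,∞) and p₁ = P{ξ = 1} < 1. Define ζ by P{ζ = 1} = 0 and P{ζ = i} = p_i/(1 - p₁) for i ≠ 1. Then the Horton-Strahler number of an unconditional ξ-Galton-Watson tree and that of an unconditional ζ-Galton-Watson tree have the same distribution. -/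
open scoped ENNReal

namespace RTree

namespace Aux8

theorem gw_node (p : ℕ → ℝ≥0∞) (ts : List RTree) :
    gwWeight p (node ts) = p ts.length * (ts.map (gwWeight p)).prod := by
  rw [gwWeight, List.attach_map_val]
def contract : RTree → RTree
  | node ts =>
    if h : ts.length = 1 then contract (ts[0]'(by omega))
    else node (ts.attach.map fun x => contract x.1)
decreasing_by
  · simp only [RTree.node.sizeOf_spec]
    have := List.sizeOf_lt_of_mem (ts.getElem_mem (by omega : 0 < ts.length)); omega
  · simp only [RTree.node.sizeOf_spec]; have := List.sizeOf_lt_of_mem x.2; omega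
theorem contract_unary (t : RTree) : contract (node [t]) = contract t := by
  rw [contract]; simp
theorem contract_nonunary (ts : List RTree) (h : ts.length ≠ 1) :
    contract (node ts) = node (ts.map contract) := by
  rw [contract]; simp [h, List.attach_map_val]

def chain : ℕ → RTree → RTree
  | 0, t => t
  | k+1, t => node [chain k t]

def arity : RTree → ℕ
  | node ts => ts.length

theorem contract_chain (k : ℕ) (t : RTree) : contract (chain k t) = contract t := by
  induction k with
  | zero => rfl
  | succ k ih => rw [chain, contract_unary, ih]

theorem gw_chain (p : ℕ → ℝ≥0∞) (k : ℕ) (t : RTree) :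
    gwWeight p (chain k t) = p 1 ^ k * gwWeight p t := by
  induction k with
  | zero => simp [chain]
  | succ k ih =>
    rw [chain, gw_node]
    simp only [List.map_cons, List.map_nil, List.prod_cons, List.prod_nil, List.length_cons,
      List.length_nil, mul_one, ih, pow_succ]
    ring

theorem chain_exists : ∀ t : RTree, ∃ k u, arity u ≠ 1 ∧ chain k u = t
  | node ts => by
    by_cases h : ts.length = 1
    · obtain ⟨a, rfl⟩ := List.length_eq_one_iff.mp h
      obtain ⟨k, u, hu, hc⟩ := chain_exists a
      exact ⟨k + 1, u, hu, by rw [chain, hc]⟩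
    · exact ⟨0, node ts, h, rfl⟩
decreasing_by simp_all only [RTree.node.sizeOf_spec, List.cons.sizeOf_spec, List.nil.sizeOf_spec]; omega

theorem arity_chain_succ (k : ℕ) (u : RTree) : arity (chain (k+1) u) = 1 := rfl

theorem chain_inj : ∀ k k' u u', arity u ≠ 1 → arity u' ≠ 1 →
    chain k u = chain k' u' → k = k' ∧ u = u' := by
  intro k
  induction k with
  | zero =>
    intro k' u u' hu hu' h
    cases k' with
    | zero => exact ⟨rfl, h⟩
    | succ j => exact absurd (by rw [show u = chain (j+1) u' from h]; rfl : arity u = 1) hu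
  | succ k ih =>
    intro k' u u' hu hu' h
    cases k' with
    | zero => exact absurd (by rw [show u' = chain (k+1) u from h.symm]; rfl : arity u' = 1) hu'
    | succ j =>
      rw [chain, chain, node.injEq, List.cons.injEq] at h
      obtain ⟨hk, hv⟩ := ih j u u' hu hu' h.1
      exact ⟨by omega, hv⟩

def hsAux (vs : List ℕ) : ℕ :=
  vs.foldr max 0 + (if 2 ≤ (vs.filter (fun v => v == vs.foldr max 0)).length then 1 else 0)

theorem hs_node (ts : List RTree) : HS (node ts) = hsAux (ts.map HS) := by
  rw [HS, List.attach_map_val]; rfl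

theorem hs_unary (t : RTree) : HS (node [t]) = HS t := by
  rw [hs_node]; simp [hsAux]

theorem hs_contract : ∀ t : RTree, HS (contract t) = HS t
  | node ts => by
    by_cases h : ts.length = 1
    · obtain ⟨a, ha⟩ := List.length_eq_one_iff.mp h
      rw [show node ts = node [a] from by rw [ha], contract_unary, hs_contract a, hs_unary]
    · rw [contract_nonunary _ h, hs_node, hs_node, List.map_map]
      congr 1
      exact List.map_congr_left fun a ha => hs_contract a
decreasing_by
  · simp_all only [RTree.node.sizeOf_spec, List.cons.sizeOf_spec, List.nil.sizeOf_spec]; omega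
  · simp only [RTree.node.sizeOf_spec]; have := List.sizeOf_lt_of_mem ha; omega

def nu : RTree → Bool
  | node ts => (ts.length != 1) && (ts.attach.map fun x => nu x.1).all id
decreasing_by simp only [RTree.node.sizeOf_spec]; have := List.sizeOf_lt_of_mem x.2; omega

theorem nu_node (ts : List RTree) :
    nu (node ts) = ((ts.length != 1) && (ts.map nu).all id) := by
  rw [nu, List.attach_map_val]

theorem nu_contract : ∀ t : RTree, nu (contract t) = true
  | node ts => by
    by_cases h : ts.length = 1
    · obtain ⟨a, ha⟩ := List.length_eq_one_iff.mp h
      rw [show node ts = node [a] from by rw [ha], contract_unary]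
      exact nu_contract a
    · rw [contract_nonunary _ h, nu_node]
      simp only [Bool.and_eq_true, List.all_eq_true, List.length_map]
      refine ⟨by simpa using h, fun b hb => ?_⟩
      simp only [List.map_map, List.mem_map, Function.comp] at hb
      obtain ⟨a, ha, rfl⟩ := hb
      simpa using nu_contract a
decreasing_by
  · simp_all only [RTree.node.sizeOf_spec, List.cons.sizeOf_spec, List.nil.sizeOf_spec]; omega
  · simp only [RTree.node.sizeOf_spec]; have := List.sizeOf_lt_of_mem ha; omega

theorem gw_zero_of_not_nu (q : ℕ → ℝ≥0∞) (hq1 : q 1 = 0) :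
    ∀ s : RTree, nu s = false → gwWeight q s = 0
  | node ss => by
    intro h
    rw [nu_node] at h
    rw [gw_node]
    rcases Bool.and_eq_false_iff.mp h with h1 | h2
    · have : ss.length = 1 := by simpa using h1
      rw [this, hq1, zero_mul]
    · have h3 : ¬ (∀ b ∈ ss.map nu, id b = true) := by
        intro hall; rw [← List.all_eq_true] at hall; simp [hall] at h2
      push_neg at h3
      obtain ⟨b, hb, hbf⟩ := h3
      obtain ⟨a, ha, rfl⟩ := List.mem_map.mp hb
      have h0 : gwWeight q a = 0 := gw_zero_of_not_nu q hq1 a (by simpa using hbf)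
      have hz : (0:ℝ≥0∞) ∈ ss.map (gwWeight q) := by
        rw [← h0]; exact List.mem_map_of_mem ha
      rw [List.prod_eq_zero hz, mul_zero]
decreasing_by simp only [RTree.node.sizeOf_spec]; have := List.sizeOf_lt_of_mem ha; omega

open Classical in
noncomputable def Fib (p : ℕ → ℝ≥0∞) (s : RTree) : ℝ≥0∞ :=
  ∑' t : RTree, if s = contract t then gwWeight p t else 0

open Classical in
noncomputable def LFib (p : ℕ → ℝ≥0∞) (ss : List RTree) : ℝ≥0∞ :=
  ∑' ts : List RTree, if ss = ts.map contract then (ts.map (gwWeight p)).prod else 0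

open Classical in
theorem LFib_eq (p : ℕ → ℝ≥0∞) : ∀ ss : List RTree, LFib p ss = (ss.map (Fib p)).prod := by
  intro ss
  induction ss with
  | nil =>
    rw [LFib]
    have h1 : ∀ ts : List RTree,
        (if ([] : List RTree) = ts.map contract then (ts.map (gwWeight p)).prod else 0)
        = if ts = [] then (1:ℝ≥0∞) else 0 := by
      intro ts
      rcases eq_or_ne ts [] with rfl | h
      · simp
      · rw [if_neg (by simpa [eq_comm, List.map_eq_nil_iff] using h), if_neg h]
    rw [tsum_congr h1, tsum_ite_eq ([] : List RTree) (fun _ => (1:ℝ≥0∞))]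
    simp
  | cons a ss ih =>
    rw [LFib, List.map_cons, List.prod_cons, ← ih]
    set f : List RTree → ℝ≥0∞ := fun ts =>
      if a :: ss = ts.map contract then (ts.map (gwWeight p)).prod else 0 with hf
    set g : RTree × List RTree → ℝ≥0∞ := fun x =>
      if (a = contract x.1 ∧ ss = x.2.map contract)
      then gwWeight p x.1 * (x.2.map (gwWeight p)).prod else 0 with hg
    have key : ∑' ts, f ts = ∑' x, g x := by
      apply tsum_eq_tsum_of_ne_zero_bij (fun x => x.1.1 :: x.1.2)
      · rintro ⟨⟨u, ts⟩, hu⟩ ⟨⟨v, ts'⟩, hv⟩ h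
        simp only [List.cons.injEq] at h
        exact Subtype.ext (by simp [Prod.ext_iff, h.1, h.2])
      · rintro ts hts
        have hcond : a :: ss = ts.map contract := by
          by_contra hc
          simp only [hf, Function.mem_support, if_neg hc] at hts
          exact hts rfl
        cases ts with
        | nil => simp at hcond
        | cons u ts' =>
          rw [List.map_cons, List.cons.injEq] at hcond
          refine ⟨⟨(u, ts'), ?_⟩, rfl⟩
          simp only [hg, Function.mem_support]
          rw [if_pos ⟨hcond.1, hcond.2⟩]
          have : f (u :: ts') ≠ 0 := hts
          simpa [hf, List.map_cons, hcond.1, hcond.2] using this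
      · rintro ⟨⟨u, ts'⟩, hu⟩
        have hcond : a = contract u ∧ ss = ts'.map contract := by
          by_contra hc
          simp only [hg, Function.mem_support, if_neg hc] at hu
          exact hu rfl
        simp [hf, hg, List.map_cons, ← hcond.1, ← hcond.2]
    rw [key, ENNReal.tsum_prod']
    have inner : ∀ u : RTree, (∑' ts' : List RTree, g (u, ts'))
        = (if a = contract u then gwWeight p u else 0) * LFib p ss := by
      intro u
      rcases eq_or_ne (contract u) a with hc | hc
      · rw [if_pos hc.symm]
        have : ∀ ts' : List RTree, g (u, ts')
            = gwWeight p u * (if ss = ts'.map contract then (ts'.map (gwWeight p)).prod else 0) := by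
          intro ts'
          rcases eq_or_ne ss (ts'.map contract) with h2 | h2
          · simp only [hg]
            rw [if_pos ⟨hc.symm, h2⟩, if_pos h2]
          · simp only [hg]
            rw [if_neg (by tauto), if_neg h2, mul_zero]
        rw [tsum_congr this, ENNReal.tsum_mul_left, LFib]
      · rw [if_neg (fun h => hc h.symm)]
        have : ∀ ts' : List RTree, g (u, ts') = 0 := by
          intro ts'
          simp only [hg]
          rw [if_neg (by tauto)]
        rw [tsum_congr this, tsum_zero, zero_mul]
    rw [tsum_congr inner, ENNReal.tsum_mul_right, Fib]


open Classical in
theorem fib_eq (p q : ℕ → ℝ≥0∞) (hqn : ∀ n, n ≠ 1 → q n = p n * (1 - p 1)⁻¹) :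
    ∀ s : RTree, nu s = true → Fib p s = gwWeight q s
  | node ss => by
    intro h
    rw [nu_node, Bool.and_eq_true] at h
    have hlen : ss.length ≠ 1 := by simpa using h.1
    have hall : ∀ a ∈ ss, nu a = true := by
      intro a ha
      simpa using List.all_eq_true.mp h.2 (nu a) (List.mem_map_of_mem (f := nu) ha)
    set R0 : ℝ≥0∞ := ∑' u : RTree,
      if (arity u ≠ 1 ∧ node ss = contract u) then gwWeight p u else 0 with hR0
    have step1 : Fib p (node ss) = (1 - p 1)⁻¹ * R0 := by
      set g : ℕ × RTree → ℝ≥0∞ := fun y =>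
        if (arity y.2 ≠ 1 ∧ node ss = contract y.2) then p 1 ^ y.1 * gwWeight p y.2 else 0 with hg
      have key : (∑' t : RTree, if node ss = contract t then gwWeight p t else 0)
          = ∑' y, g y := by
        apply tsum_eq_tsum_of_ne_zero_bij (fun y => chain y.1.1 y.1.2)
        · rintro ⟨⟨k, u⟩, hk⟩ ⟨⟨k', u'⟩, hk'⟩ hch
          have h1 : arity u ≠ 1 := by
            by_contra hc
            simp only [hg, Function.mem_support] at hk
            rw [if_neg (by tauto)] at hk; exact hk rfl
          have h2 : arity u' ≠ 1 := by
            by_contra hc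
            simp only [hg, Function.mem_support] at hk'
            rw [if_neg (by tauto)] at hk'; exact hk' rfl
          simp only at hch
          obtain ⟨e1, e2⟩ := chain_inj _ _ _ _ h1 h2 hch
          exact Subtype.ext (by simp [Prod.ext_iff, e1, e2])
        · intro t ht
          have hcond : node ss = contract t := by
            by_contra hc
            simp only [Function.mem_support, if_neg hc] at ht
            exact ht rfl
          obtain ⟨k, u, hu, rfl⟩ := chain_exists t
          refine ⟨⟨(k, u), ?_⟩, rfl⟩
          simp only [hg, Function.mem_support]
          rw [if_pos ⟨hu, by rwa [contract_chain] at hcond⟩, ← gw_chain]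
          simpa [if_pos hcond] using ht
        · rintro ⟨⟨k, u⟩, hk⟩
          have hcond : arity u ≠ 1 ∧ node ss = contract u := by
            by_contra hc
            simp only [hg, Function.mem_support] at hk
            rw [if_neg hc] at hk; exact hk rfl
          simp only [hg]
          rw [if_pos hcond, if_pos (by rw [contract_chain]; exact hcond.2), gw_chain]
      rw [Fib, key, ENNReal.tsum_prod']
      have inner : ∀ k : ℕ, (∑' u : RTree, g (k, u)) = p 1 ^ k * R0 := by
        intro k
        rw [hR0, ← ENNReal.tsum_mul_left]
        apply tsum_congr
        intro u
        rcases Classical.em (arity u ≠ 1 ∧ node ss = contract u) with hcu | hcu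
        · simp only [hg]; rw [if_pos hcu, if_pos hcu]
        · simp only [hg]; rw [if_neg hcu, if_neg hcu, mul_zero]
      rw [tsum_congr inner, ENNReal.tsum_mul_right, ENNReal.tsum_geometric]
    have step2 : R0 = p ss.length * LFib p ss := by
      rw [LFib, ← ENNReal.tsum_mul_left, hR0]
      apply tsum_eq_tsum_of_ne_zero_bij (fun y => node y.1)
      · rintro ⟨ts, hts⟩ ⟨ts', hts'⟩ hch
        simp only [node.injEq] at hch
        exact Subtype.ext hch
      · rintro u hu
        obtain ⟨ts⟩ := u
        have hcond : arity (node ts) ≠ 1 ∧ node ss = contract (node ts) := by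
          by_contra hc
          simp only [Function.mem_support, if_neg hc] at hu
          exact hu rfl
        have hts1 : ts.length ≠ 1 := hcond.1
        have hmap : ss = ts.map contract := by
          have h5 := hcond.2
          rw [contract_nonunary _ hts1, node.injEq] at h5
          exact h5
        have hlen2 : ts.length = ss.length := by rw [hmap, List.length_map]
        refine ⟨⟨ts, ?_⟩, rfl⟩
        have hval : gwWeight p (node ts) ≠ 0 := by
          simpa [Function.mem_support, if_pos hcond] using hu
        simp only [Function.mem_support]
        rw [if_pos hmap]
        rw [gw_node, hlen2] at hval
        exact hval
      · rintro ⟨ts, hts⟩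
        have hmap : ss = ts.map contract := by
          by_contra hc
          simp only [Function.mem_support] at hts
          rw [if_neg hc, mul_zero] at hts
          exact hts rfl
        have hlen2 : ts.length = ss.length := by rw [hmap, List.length_map]
        have hcond : arity (node ts) ≠ 1 ∧ node ss = contract (node ts) :=
          ⟨by simpa [arity, hlen2] using hlen,
           by rw [contract_nonunary _ (by simpa [hlen2] using hlen), ← hmap]⟩
        simp only
        rw [if_pos hcond, if_pos hmap, gw_node, hlen2]
    have step3 : LFib p ss = (ss.map (gwWeight q)).prod := by
      rw [LFib_eq]
      congr 1
      apply List.map_congr_left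
      intro a ha
      exact fib_eq p q hqn a (hall a ha)
    rw [step1, step2, step3, gw_node, hqn ss.length hlen]
    ring
decreasing_by simp only [RTree.node.sizeOf_spec]; have := List.sizeOf_lt_of_mem ha; omega

open Classical in
theorem fib_eq_all (p q : ℕ → ℝ≥0∞) (hq1 : q 1 = 0)
    (hqn : ∀ n, n ≠ 1 → q n = p n * (1 - p 1)⁻¹) (s : RTree) :
    Fib p s = gwWeight q s := by
  cases hnu : nu s with
  | true => exact fib_eq p q hqn s hnu
  | false =>
    rw [gw_zero_of_not_nu q hq1 s hnu, Fib]
    have hz : ∀ t : RTree, (if s = contract t then gwWeight p t else 0) = 0 := by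
      intro t
      rw [if_neg]
      intro hc
      rw [hc, nu_contract t] at hnu
      exact Bool.noConfusion hnu
    rw [tsum_congr hz, tsum_zero]


end Aux8
end RTree


/-- Removing the probability of having exactly one child (and rescaling)
does not change the distribution of the Horton-Strahler number of an unconditional
critical Galton-Watson tree with variance in `(0, ∞)`. -/
theorem hs_remove_p1 (p : ℕ → ℝ≥0∞) (hsum : ∑' i : ℕ, p i = 1)
    (hmean : ∑' i : ℕ, (i : ℝ≥0∞) * p i = 1)
    (hvarpos : 1 < ∑' i : ℕ, (i : ℝ≥0∞) ^ 2 * p i)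
    (hvarfin : ∑' i : ℕ, (i : ℝ≥0∞) ^ 2 * p i < ⊤)
    (hp1 : p 1 < 1) :
    ∀ x : ℕ,
      (∑' t : RTree, if RTree.HS t = x then RTree.gwWeight p t else 0) =
      ∑' t : RTree, if RTree.HS t = x then
          RTree.gwWeight (fun i => if i = 1 then 0 else p i / (1 - p 1)) t
        else 0 := by
  classical
  intro x
  set q : ℕ → ℝ≥0∞ := fun i => if i = 1 then 0 else p i / (1 - p 1) with hqdef
  have hq1 : q 1 = 0 := by simp [hqdef]
  have hqn : ∀ n, n ≠ 1 → q n = p n * (1 - p 1)⁻¹ := by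
    intro n hn; simp [hqdef, hn, div_eq_mul_inv]
  calc (∑' t : RTree, if RTree.HS t = x then RTree.gwWeight p t else 0)
      = ∑' t : RTree, if RTree.HS (RTree.Aux8.contract t) = x then RTree.gwWeight p t else 0 := by
        apply tsum_congr; intro t; rw [RTree.Aux8.hs_contract t]
    _ = ∑' t : RTree, ∑' s : RTree, (if s = RTree.Aux8.contract t then
          (if RTree.HS (RTree.Aux8.contract t) = x then RTree.gwWeight p t else 0) else 0) := by
        apply tsum_congr; intro t
        exact (tsum_ite_eq (RTree.Aux8.contract t) (fun _ => if RTree.HS (RTree.Aux8.contract t) = x then RTree.gwWeight p t else 0)).symm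
    _ = ∑' s : RTree, ∑' t : RTree, (if s = RTree.Aux8.contract t then
          (if RTree.HS (RTree.Aux8.contract t) = x then RTree.gwWeight p t else 0) else 0) :=
        ENNReal.tsum_comm
    _ = ∑' s : RTree, (if RTree.HS s = x then RTree.Aux8.Fib p s else 0) := by
        apply tsum_congr; intro s
        rcases Classical.em (RTree.HS s = x) with hx | hx
        · rw [if_pos hx, RTree.Aux8.Fib]
          apply tsum_congr; intro t
          rcases eq_or_ne s (RTree.Aux8.contract t) with hc | hc
          · rw [if_pos hc, if_pos hc, if_pos (by rw [← hc]; exact hx)]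
          · rw [if_neg hc, if_neg hc]
        · rw [if_neg hx]
          have hz : ∀ t : RTree, (if s = RTree.Aux8.contract t then
              (if RTree.HS (RTree.Aux8.contract t) = x then RTree.gwWeight p t else 0) else 0) = 0 := by
            intro t
            rcases eq_or_ne s (RTree.Aux8.contract t) with hc | hc
            · rw [if_pos hc, if_neg (by rw [← hc]; exact hx)]
            · rw [if_neg hc]
          rw [tsum_congr hz, tsum_zero]
    _ = ∑' s : RTree, (if RTree.HS s = x then RTree.gwWeight q s else 0) := by
        apply tsum_congr; intro s
        rw [RTree.Aux8.fib_eq_all p q hq1 hqn s]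
end

section
/- Under the same hypotheses, the rigid Horton-Strahler number Rig of an unconditional ξ-Galton-Watson tree is equidistributed with that of the ζ-Galton-Watson tree obtained by suppressing single-child nodes. -/
open scoped ENNReal

namespace RTree

-- auxiliary material

theorem myind (motive : RTree → Prop)
    (h : ∀ ts, (∀ t ∈ ts, motive t) → motive (node ts)) : ∀ t, motive t
  | node ts => h ts (fun t ht => myind motive h t)
decreasing_by simp only [RTree.node.sizeOf_spec]; have := List.sizeOf_lt_of_mem ht; omega

theorem gwWeight_node (p : ℕ → ℝ≥0∞) (ts : List RTree) :
    gwWeight p (node ts) = p ts.length * (ts.map (gwWeight p)).prod := by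
  rw [gwWeight, List.attach_map_val]

theorem Rig_node (ts : List RTree) :
    Rig (node ts) =
      (if (ts.map Rig).length ≤ 1 then (ts.map Rig).foldr max 0
       else (ts.map Rig).foldr max 0 +
          (if (ts.map Rig).all (fun v => v == (ts.map Rig).foldr max 0) then 1 else 0)) := by
  rw [Rig, List.attach_map_val]

def contract : RTree → RTree
  | node [t] => contract t
  | node ts => node (ts.attach.map fun x => contract x.1)
decreasing_by
  · simp only [RTree.node.sizeOf_spec]; simp; omega
  · simp only [RTree.node.sizeOf_spec]; have := List.sizeOf_lt_of_mem x.2; omega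

theorem contract_single (t : RTree) : contract (node [t]) = contract t := by
  rw [contract]

theorem contract_node (ts : List RTree) (h : ts.length ≠ 1) :
    contract (node ts) = node (ts.map contract) := by
  match ts with
  | [] => rw [contract, List.attach_map_val]; intro t ht; simp at ht
  | [t] => simp at h
  | a :: b :: r => rw [contract, List.attach_map_val]; intro t ht; simp at ht

theorem Rig_contract : ∀ t : RTree, Rig (contract t) = Rig t := by
  refine myind _ ?_
  intro ts IH
  by_cases h : ts.length = 1
  · match ts, h with
    | [t], _ =>
      rw [contract_single, IH t (by simp)]
      rw [Rig_node]
      simp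
  · rw [contract_node ts h, Rig_node, Rig_node, List.map_map]
    have : ts.map (Rig ∘ contract) = ts.map Rig := by
      refine List.map_congr_left ?_
      intro t ht; exact IH t ht
    rw [this]

def chain : ℕ → RTree → RTree
  | 0, t => t
  | k + 1, t => node [chain k t]

theorem gwWeight_chain (p : ℕ → ℝ≥0∞) (k : ℕ) (t : RTree) :
    gwWeight p (chain k t) = (p 1) ^ k * gwWeight p t := by
  induction k with
  | zero => simp [chain]
  | succ k ih => rw [chain, gwWeight_node]; simp [ih, pow_succ]; ring

def peel : RTree → ℕ × List RTree
  | node [t] => ((peel t).1 + 1, (peel t).2)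
  | node ts => (0, ts)
decreasing_by simp only [RTree.node.sizeOf_spec]; simp; omega

theorem peel_single (t : RTree) : peel (node [t]) = ((peel t).1 + 1, (peel t).2) := by
  rw [peel]

theorem peel_node (ts : List RTree) (h : ts.length ≠ 1) : peel (node ts) = (0, ts) := by
  match ts with
  | [] => rw [peel]; intro t ht; simp at ht
  | [t] => simp at h
  | a :: b :: r => rw [peel]; intro t ht; simp at ht

theorem peel_len (t : RTree) : (peel t).2.length ≠ 1 := by
  induction t using myind with
  | h ts IH =>
    by_cases h : ts.length = 1
    · match ts, h with
      | [t], _ => rw [peel_single]; exact IH t (by simp)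
    · rw [peel_node ts h]; exact h

theorem chain_peel (t : RTree) : chain (peel t).1 (node (peel t).2) = t := by
  induction t using myind with
  | h ts IH =>
    by_cases h : ts.length = 1
    · match ts, h with
      | [t], _ =>
        rw [peel_single]; simp only [chain]
        rw [IH t (by simp)]
    · rw [peel_node ts h]; rfl

theorem contract_eq_peel (t : RTree) : contract t = node ((peel t).2.map contract) := by
  induction t using myind with
  | h ts IH =>
    by_cases h : ts.length = 1
    · match ts, h with
      | [t], _ => rw [peel_single, contract_single]; exact IH t (by simp)
    · rw [peel_node ts h, contract_node ts h]

theorem contract_len (t : RTree) (cs : List RTree) (h : contract t = node cs) :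
    cs.length ≠ 1 := by
  rw [contract_eq_peel] at h
  cases h
  simpa using peel_len t

theorem peel_chain (k : ℕ) (l : List RTree) (hl : l.length ≠ 1) :
    peel (chain k (node l)) = (k, l) := by
  induction k with
  | zero => exact peel_node l hl
  | succ k ih => rw [chain, peel_single, ih]

theorem contract_chain (k : ℕ) (t : RTree) : contract (chain k t) = contract t := by
  induction k with
  | zero => rfl
  | succ k ih => rw [chain, contract_single, ih]

theorem tsum_list (p q : ℕ → ℝ≥0∞) (cs : List RTree)
    (IH : ∀ c ∈ cs, ∑' t : {t : RTree // contract t = c}, gwWeight p t.1 = gwWeight q c) :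
    ∑' l : {l : List RTree // l.map contract = cs}, ((l.1.map (gwWeight p)).prod)
      = (cs.map (gwWeight q)).prod := by
  induction cs with
  | nil =>
    rw [tsum_eq_single (⟨[], rfl⟩ : {l : List RTree // l.map contract = []})]
    · simp
    · intro b hb
      exfalso; apply hb
      have := b.2
      rw [List.map_eq_nil_iff] at this
      exact Subtype.ext this
  | cons c cs ihc =>
    have IHc : ∀ c' ∈ cs, ∑' t : {t : RTree // contract t = c'}, gwWeight p t.1 = gwWeight q c' :=
      fun c' hc' => IH c' (List.mem_cons_of_mem _ hc')
    let g : {t : RTree // contract t = c} × {l : List RTree // l.map contract = cs} →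
        {l : List RTree // l.map contract = c :: cs} :=
      fun x => ⟨x.1.1 :: x.2.1, by simp [x.1.2, x.2.2]⟩
    have hg : Function.Bijective g := by
      constructor
      · rintro ⟨⟨t, ht⟩, ⟨l, hl⟩⟩ ⟨⟨t', ht'⟩, ⟨l', hl'⟩⟩ h
        simp only [g, Subtype.mk.injEq, List.cons.injEq] at h
        simp [h.1, h.2]
      · rintro ⟨l, hl⟩
        match l, hl with
        | t :: l', hl =>
          simp only [List.map_cons, List.cons.injEq] at hl
          exact ⟨⟨⟨t, hl.1⟩, ⟨l', hl.2⟩⟩, rfl⟩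
    rw [← (Equiv.ofBijective g hg).tsum_eq]
    have : ∀ x : {t : RTree // contract t = c} × {l : List RTree // l.map contract = cs},
        ((((Equiv.ofBijective g hg) x).1.map (gwWeight p)).prod) =
          gwWeight p x.1.1 * ((x.2.1.map (gwWeight p)).prod) := by
      rintro ⟨⟨t, ht⟩, ⟨l, hl⟩⟩; simp [g, Equiv.ofBijective]
    rw [tsum_congr this, ENNReal.tsum_prod']
    simp only [ENNReal.tsum_mul_left]
    rw [ENNReal.tsum_mul_right, ihc IHc, IH c List.mem_cons_self]
    simp

theorem fiber_sum (p q : ℕ → ℝ≥0∞) (hq1 : q 1 = 0)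
    (hq : ∀ n, n ≠ 1 → q n = (1 - p 1)⁻¹ * p n) :
    ∀ s : RTree, ∑' t : {t : RTree // contract t = s}, gwWeight p t.1 = gwWeight q s := by
  refine myind _ ?_
  intro cs IH
  by_cases h : cs.length = 1
  · have he : IsEmpty {t : RTree // contract t = node cs} := by
      constructor; rintro ⟨t, ht⟩; exact contract_len t cs ht h
    rw [tsum_empty, gwWeight_node, h, hq1, zero_mul]
  · let g : ℕ × {l : List RTree // l.map contract = cs} →
        {t : RTree // contract t = node cs} :=
      fun x => ⟨chain x.1 (node x.2.1), by
        rw [contract_chain, contract_node _ (fun hc => h (by rw [← x.2.2, List.length_map, hc])), x.2.2]⟩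
    have hg : Function.Bijective g := by
      constructor
      · rintro ⟨k, ⟨l, hl⟩⟩ ⟨k', ⟨l', hl'⟩⟩ hh
        simp only [g, Subtype.mk.injEq] at hh
        have h1 : l.length ≠ 1 := by rw [← hl] at h; simpa using h
        have h2 : l'.length ≠ 1 := by rw [← hl'] at h; simpa using h
        have := peel_chain k l h1
        rw [hh, peel_chain k' l' h2] at this
        simp only [Prod.mk.injEq] at this ⊢
        exact ⟨this.1.symm, Subtype.ext this.2.symm⟩
      · rintro ⟨t, ht⟩
        have hc := contract_eq_peel t
        rw [ht] at hc
        cases hc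
        exact ⟨⟨(peel t).1, ⟨(peel t).2, rfl⟩⟩, Subtype.ext (chain_peel t)⟩
    rw [← (Equiv.ofBijective g hg).tsum_eq]
    have : ∀ x : ℕ × {l : List RTree // l.map contract = cs},
        gwWeight p ((Equiv.ofBijective g hg) x).1 =
          (p 1) ^ x.1 * (p cs.length * ((x.2.1.map (gwWeight p)).prod)) := by
      rintro ⟨k, ⟨l, hl⟩⟩
      have hlen : l.length = cs.length := by rw [← hl]; simp
      simp [g, Equiv.ofBijective, gwWeight_chain, gwWeight_node, hlen]
    rw [tsum_congr this, ENNReal.tsum_prod']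
    simp only [ENNReal.tsum_mul_left]
    rw [ENNReal.tsum_mul_right, tsum_list p q cs IH, ENNReal.tsum_geometric,
      gwWeight_node, hq cs.length h, mul_assoc]

end RTree


/-- Removing the probability of having exactly one child (and rescaling)
does not change the distribution of the rigid Horton-Strahler number of an unconditional
critical Galton-Watson tree with variance in `(0, ∞)`. -/
theorem rig_remove_p1 (p : ℕ → ℝ≥0∞) (hsum : ∑' i : ℕ, p i = 1)
    (hmean : ∑' i : ℕ, (i : ℝ≥0∞) * p i = 1)
    (hvarpos : 1 < ∑' i : ℕ, (i : ℝ≥0∞) ^ 2 * p i)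
    (hvarfin : ∑' i : ℕ, (i : ℝ≥0∞) ^ 2 * p i < ⊤)
    (hp1 : p 1 < 1) :
    ∀ x : ℕ,
      (∑' t : RTree, if RTree.Rig t = x then RTree.gwWeight p t else 0) =
      ∑' t : RTree, if RTree.Rig t = x then
          RTree.gwWeight (fun i => if i = 1 then 0 else p i / (1 - p 1)) t
        else 0 := by
  intro x
  set q : ℕ → ℝ≥0∞ := fun i => if i = 1 then 0 else p i / (1 - p 1) with hqdef
  have key := RTree.fiber_sum p q (by simp [hqdef])
    (fun n hn => by simp [hqdef, hn, ENNReal.div_eq_inv_mul])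
  let e : RTree ≃ Σ s : RTree, {t : RTree // RTree.contract t = s} :=
    { toFun := fun t => ⟨RTree.contract t, ⟨t, rfl⟩⟩
      invFun := fun x => x.2.1
      left_inv := fun t => rfl
      right_inv := by rintro ⟨s, ⟨t, ht⟩⟩; cases ht; rfl }
  have he : ∀ (f : RTree → ℝ≥0∞), ∑' t : RTree, f t =
      ∑' s : RTree, ∑' t : {t : RTree // RTree.contract t = s}, f t.1 := by
    intro f
    rw [← e.symm.tsum_eq, ENNReal.tsum_sigma']
    rfl
  rw [he]
  refine tsum_congr fun s => ?_
  have hr : ∀ t : {t : RTree // RTree.contract t = s}, RTree.Rig t.1 = RTree.Rig s := by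
    rintro ⟨t, rfl⟩; exact (RTree.Rig_contract t).symm
  calc ∑' t : {t : RTree // RTree.contract t = s},
        (if RTree.Rig t.1 = x then RTree.gwWeight p t.1 else 0)
      = ∑' t : {t : RTree // RTree.contract t = s},
        (if RTree.Rig s = x then RTree.gwWeight p t.1 else 0) := by
        refine tsum_congr fun t => ?_; rw [hr t]
    _ = if RTree.Rig s = x then RTree.gwWeight q s else 0 := by
        by_cases hx : RTree.Rig s = x
        · simp only [hx, if_true]; exact key s
        · simp [hx]
end

section
/- Fix γ ∈ (0,1) and ε ∈ (0,1), and suppose a positive sequence q : ℕ → ℝ satisfies, for all i ≥ 1: q_i ≤ γ q_{i-1}, and (1-ε) q_{i-1}²/(2 q_i⁺) ≤ q_i ≤ q_{i-1}²/(2 q_i⁺) where q_i⁺ = Σ_{k≥i} q_k < ∞. Then for all i ≥ 1: √((1-ε)(1-γ)/2) ≤ q_i/q_{i-1} ≤ √((1 - √((1-ε)(1-γ)/2))/2). -/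
open scoped ENNReal

/-- the ratio-pinning lemma for the Horton-Strahler recursion. -/
theorem hs_ratio_pinning (γ ε : ℝ) (hγ : γ ∈ Set.Ioo (0 : ℝ) 1) (hε : ε ∈ Set.Ioo (0 : ℝ) 1)
    (q : ℕ → ℝ) (hq : ∀ i, 0 < q i) (hsum : Summable q)
    (hγq : ∀ i, 1 ≤ i → q i ≤ γ * q (i - 1))
    (hlow : ∀ i, 1 ≤ i → (1 - ε) * (q (i - 1)) ^ 2 / (2 * ∑' k, q (i + k)) ≤ q i)
    (hupp : ∀ i, 1 ≤ i → q i ≤ (q (i - 1)) ^ 2 / (2 * ∑' k, q (i + k))) :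
    ∀ i, 1 ≤ i →
      Real.sqrt ((1 - ε) * (1 - γ) / 2) ≤ q i / q (i - 1) ∧
      q i / q (i - 1) ≤ Real.sqrt ((1 - Real.sqrt ((1 - ε) * (1 - γ) / 2)) / 2) := by
  obtain ⟨hγ0, hγ1⟩ := hγ
  obtain ⟨hε0, hε1⟩ := hε
  set c : ℝ := (1 - ε) * (1 - γ) / 2 with hc
  have hc0 : 0 < c := by
    apply div_pos (mul_pos (by linarith) (by linarith)) (by norm_num)
  have hc1 : c < 1 := by
    have h1 : (1 - ε) * (1 - γ) < 1 * 1 := by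
      apply mul_lt_mul' (by linarith) (by linarith) (by linarith) (by norm_num)
    rw [hc]; nlinarith
  have hsc0 : 0 < Real.sqrt c := Real.sqrt_pos.mpr hc0
  have hsc1 : Real.sqrt c < 1 := by
    rw [show (1:ℝ) = Real.sqrt 1 by simp]
    exact Real.sqrt_lt_sqrt (le_of_lt hc0) hc1
  have hsum' : ∀ i : ℕ, Summable fun k => q (i + k) := by
    intro i
    have := (summable_nat_add_iff i).mpr hsum
    simpa [add_comm] using this
  -- geometric upper bound on tail sums
  have hgeomUB : ∀ i, 1 ≤ i → ∀ k, q (i + k) ≤ γ ^ k * q i := by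
    intro i hi k
    induction k with
    | zero => simp
    | succ k ih =>
        have h1 : q (i + k + 1) ≤ γ * q (i + k) := by
          have := hγq (i + k + 1) (by omega)
          simpa using this
        calc q (i + (k + 1)) = q (i + k + 1) := by ring_nf
          _ ≤ γ * q (i + k) := h1
          _ ≤ γ * (γ ^ k * q i) := by
              exact mul_le_mul_of_nonneg_left ih (le_of_lt hγ0)
          _ = γ ^ (k + 1) * q i := by ring
  have hSle : ∀ i, 1 ≤ i → (∑' k, q (i + k)) ≤ q i / (1 - γ) := by
    intro i hi
    have hg : Summable fun k : ℕ => γ ^ k * q i :=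
      (summable_geometric_of_lt_one (le_of_lt hγ0) hγ1).mul_right _
    have h := Summable.tsum_le_tsum (hgeomUB i hi) (hsum' i) hg
    calc (∑' k, q (i + k)) ≤ ∑' k : ℕ, γ ^ k * q i := h
      _ = (1 - γ)⁻¹ * q i := by
          rw [tsum_mul_right, tsum_geometric_of_lt_one (le_of_lt hγ0) hγ1]
      _ = q i / (1 - γ) := by ring
  have hSpos : ∀ i : ℕ, 0 < ∑' k, q (i + k) :=
    fun i => Summable.tsum_pos (hsum' i) (fun k => (hq _).le) 0 (hq _)
  -- lower ratio bound
  have hA : ∀ i, 1 ≤ i → Real.sqrt c * q (i - 1) ≤ q i := by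
    intro i hi
    have hS := hSle i hi
    have hl := hlow i hi
    have h2S : 0 < 2 * ∑' k, q (i + k) := mul_pos two_pos (hSpos i)
    rw [div_le_iff₀ h2S] at hl
    have key : c * (q (i - 1)) ^ 2 ≤ (q i) ^ 2 := by
      have h3 : q i * (2 * ∑' k, q (i + k)) ≤ q i * (2 * (q i / (1 - γ))) := by
        apply mul_le_mul_of_nonneg_left _ (hq i).le
        linarith
      have h4 : (1 - ε) * (q (i - 1)) ^ 2 ≤ 2 * (q i) ^ 2 / (1 - γ) := by
        have := le_trans hl h3
        calc (1 - ε) * (q (i - 1)) ^ 2 ≤ q i * (2 * (q i / (1 - γ))) := this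
          _ = 2 * (q i) ^ 2 / (1 - γ) := by ring
      rw [hc]
      rw [le_div_iff₀ (by linarith : (0:ℝ) < 1 - γ)] at h4
      nlinarith
    calc Real.sqrt c * q (i - 1)
        = Real.sqrt (c * (q (i - 1)) ^ 2) := by
          rw [Real.sqrt_mul (le_of_lt hc0), Real.sqrt_sq (hq _).le]
      _ ≤ Real.sqrt ((q i) ^ 2) := Real.sqrt_le_sqrt key
      _ = q i := Real.sqrt_sq (hq _).le
  -- geometric lower bound on tail sums
  have hgeomLB : ∀ i, 1 ≤ i → ∀ k, Real.sqrt c ^ k * q i ≤ q (i + k) := by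
    intro i hi k
    induction k with
    | zero => simp
    | succ k ih =>
        have h1 : Real.sqrt c * q (i + k) ≤ q (i + k + 1) := by
          have := hA (i + k + 1) (by omega)
          simpa using this
        calc Real.sqrt c ^ (k + 1) * q i
            = Real.sqrt c * (Real.sqrt c ^ k * q i) := by ring
          _ ≤ Real.sqrt c * q (i + k) := by
              exact mul_le_mul_of_nonneg_left ih (le_of_lt hsc0)
          _ ≤ q (i + k + 1) := h1
          _ = q (i + (k + 1)) := by ring_nf
  have hSge : ∀ i, 1 ≤ i → q i / (1 - Real.sqrt c) ≤ ∑' k, q (i + k) := by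
    intro i hi
    have hg : Summable fun k : ℕ => Real.sqrt c ^ k * q i :=
      (summable_geometric_of_lt_one (le_of_lt hsc0) hsc1).mul_right _
    have h := Summable.tsum_le_tsum (hgeomLB i hi) hg (hsum' i)
    calc q i / (1 - Real.sqrt c) = (1 - Real.sqrt c)⁻¹ * q i := by ring
      _ = ∑' k : ℕ, Real.sqrt c ^ k * q i := by
          rw [tsum_mul_right, tsum_geometric_of_lt_one (le_of_lt hsc0) hsc1]
      _ ≤ ∑' k, q (i + k) := h
  intro i hi
  have hqi1 : 0 < q (i - 1) := hq _
  constructor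
  · rw [le_div_iff₀ hqi1]
    exact hA i hi
  · have hu := hupp i hi
    have h2S : 0 < 2 * ∑' k, q (i + k) := mul_pos two_pos (hSpos i)
    rw [le_div_iff₀ h2S] at hu
    have hS := hSge i hi
    have key : (q i) ^ 2 ≤ (1 - Real.sqrt c) / 2 * (q (i - 1)) ^ 2 := by
      have h3 : q i * (2 * (q i / (1 - Real.sqrt c))) ≤ q i * (2 * ∑' k, q (i + k)) := by
        apply mul_le_mul_of_nonneg_left _ (hq i).le
        linarith
      have h4 : 2 * (q i) ^ 2 / (1 - Real.sqrt c) ≤ (q (i - 1)) ^ 2 := by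
        calc 2 * (q i) ^ 2 / (1 - Real.sqrt c)
            = q i * (2 * (q i / (1 - Real.sqrt c))) := by ring
          _ ≤ q i * (2 * ∑' k, q (i + k)) := h3
          _ ≤ (q (i - 1)) ^ 2 := hu
      rw [div_le_iff₀ (by linarith : (0:ℝ) < 1 - Real.sqrt c)] at h4
      nlinarith
    have hd0 : (0:ℝ) ≤ (1 - Real.sqrt c) / 2 := by linarith
    calc q i / q (i - 1) = Real.sqrt ((q i / q (i - 1)) ^ 2) := by
          rw [Real.sqrt_sq (div_nonneg (hq i).le hqi1.le)]
      _ ≤ Real.sqrt ((1 - Real.sqrt c) / 2) := by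
          apply Real.sqrt_le_sqrt
          rw [div_pow, div_le_iff₀ (pow_pos hqi1 2)]
          exact key
end

section
/- If a rooted tree T with n nodes has Horton-Strahler number HS(T) ≥ x (for x ≥ 2), then among the n preorder-rotations of its degree sequence, there is some starting index j such that the first tree of the j-rotated forest has Horton-Strahler number ≥ x - 2 and size at most n/4. -/
open scoped ENNReal

namespace RTree

theorem size_node (ts : List RTree) : size (node ts) = 1 + (ts.map size).sum := by
  rw [size, List.attach_map_val]

theorem HS_node (ts : List RTree) : HS (node ts) =
    (ts.map HS).foldr max 0 +
      (if 2 ≤ ((ts.map HS).filter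
          (fun v => v == (ts.map HS).foldr max 0)).length then 1 else 0) := by
  rw [HS]; simp only [List.attach_map_val]

theorem degSeq_node (ts : List RTree) :
    degSeq (node ts) = ts.length :: (ts.map degSeq).flatten := by
  rw [degSeq]; simp only [List.attach_map_val]

theorem size_pos (T : RTree) : 0 < T.size := by
  obtain ⟨ts⟩ := T; rw [size_node]; omega

theorem length_degSeq : ∀ (T : RTree), (degSeq T).length = T.size := by
  have : ∀ N (T : RTree), sizeOf T ≤ N → (degSeq T).length = T.size := by
    intro N
    induction N with
    | zero => intro T h; obtain ⟨ts⟩ := T; simp [RTree.node.sizeOf_spec] at h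
    | succ N ih =>
      rintro ⟨ts⟩ h
      rw [degSeq_node, size_node]
      simp only [List.length_cons, List.length_flatten, List.map_map]
      have heq : ts.map (List.length ∘ degSeq) = ts.map size := by
        apply List.map_congr_left
        intro t ht
        have := List.sizeOf_lt_of_mem ht
        simp only [RTree.node.sizeOf_spec] at h
        exact ih t (by omega)
      rw [heq]; omega
  intro T; exact this (sizeOf T) T le_rfl

/-- Subtree relation. -/
inductive Sub : RTree → RTree → Prop
  | refl (t : RTree) : Sub t t
  | child {s t : RTree} {ts : List RTree} (ht : t ∈ ts) (h : Sub s t) : Sub s (node ts)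

theorem Sub.trans' {a b c : RTree} (hab : Sub a b) (hbc : Sub b c) : Sub a c := by
  induction hbc with
  | refl => exact hab
  | child ht h ih => exact Sub.child ht ih

theorem Sub.size_le {s T : RTree} (h : Sub s T) : s.size ≤ T.size := by
  induction h with
  | refl => exact le_rfl
  | @child t ts ht h ih =>
    refine ih.trans ?_
    rw [size_node]
    have : t.size ∈ ts.map size := List.mem_map_of_mem ht
    have := List.single_le_sum (fun x _ => Nat.zero_le x) _ this
    omega

theorem Sub.degSeq_infix {s T : RTree} (h : Sub s T) :
    ∃ A B, T.degSeq = A ++ s.degSeq ++ B := by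
  induction h with
  | refl => exact ⟨[], [], by simp⟩
  | @child t ts ht h ih =>
    obtain ⟨A, B, hAB⟩ := ih
    obtain ⟨l1, l2, rfl⟩ := List.append_of_mem ht
    refine ⟨(l1 ++ t :: l2).length :: ((l1.map degSeq).flatten ++ A),
      B ++ (l2.map degSeq).flatten, ?_⟩
    rw [degSeq_node]
    simp [hAB]

theorem foldr_max_zero_mem (l : List ℕ) : l.foldr max 0 = 0 ∨ l.foldr max 0 ∈ l := by
  induction l with
  | nil => left; rfl
  | cons a l ih =>
    simp only [List.foldr_cons]
    rcases le_total a (l.foldr max 0) with h | h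
    · rw [max_eq_right h]
      rcases ih with h0 | hm
      · left; exact h0
      · right; exact List.mem_cons_of_mem _ hm
    · rw [max_eq_left h]; right; exact List.mem_cons_self

theorem filter_two_sublist {α : Type*} (l : List α) (p : α → Bool)
    (h : 2 ≤ (l.filter p).length) : ∃ a b, List.Sublist [a, b] l ∧ p a ∧ p b := by
  have hsub : (l.filter p).Sublist l := List.filter_sublist
  match hl : l.filter p with
  | [] => rw [hl] at h; simp at h
  | [a] => rw [hl] at h; simp at h
  | a :: b :: rest =>
    rw [hl] at hsub
    refine ⟨a, b, ?_, ?_, ?_⟩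
    · exact List.Sublist.trans (by simp) hsub
    · have : a ∈ l.filter p := by rw [hl]; simp
      exact (List.mem_filter.mp this).2
    · have : b ∈ l.filter p := by rw [hl]; simp
      exact (List.mem_filter.mp this).2

theorem hs_split : ∀ (T : RTree) (x : ℕ), 1 ≤ x → x ≤ T.HS →
    ∃ t1 t2, Sub t1 T ∧ Sub t2 T ∧ x - 1 ≤ t1.HS ∧ x - 1 ≤ t2.HS ∧
      t1.size + t2.size ≤ T.size := by
  have main : ∀ N (T : RTree), sizeOf T ≤ N → ∀ x : ℕ, 1 ≤ x → x ≤ T.HS →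
      ∃ t1 t2, Sub t1 T ∧ Sub t2 T ∧ x - 1 ≤ t1.HS ∧ x - 1 ≤ t2.HS ∧
        t1.size + t2.size ≤ T.size := by
    intro N
    induction N with
    | zero => intro T h; obtain ⟨ts⟩ := T; simp [RTree.node.sizeOf_spec] at h
    | succ N ih =>
      rintro ⟨ts⟩ hN x hx hHS
      rw [HS_node] at hHS
      set m := (ts.map HS).foldr max 0 with hm
      by_cases hxm : x ≤ m
      · -- descend into a child attaining the max
        have hm0 : m ≠ 0 := by omega
        rcases foldr_max_zero_mem (ts.map HS) with h0 | hmem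
        · exact absurd h0 (by rw [← hm]; exact hm0)
        obtain ⟨c, hc, hcHS⟩ := List.mem_map.mp hmem
        have hsz : sizeOf c < sizeOf (node ts) := by
          simp only [RTree.node.sizeOf_spec]
          have := List.sizeOf_lt_of_mem hc; omega
        obtain ⟨t1, t2, h1, h2, hh1, hh2, hsum⟩ :=
          ih c (by omega) x hx (by rw [hcHS]; exact hxm)
        exact ⟨t1, t2, h1.trans' (Sub.child hc (Sub.refl c)),
          h2.trans' (Sub.child hc (Sub.refl c)), hh1, hh2,
          hsum.trans ((Sub.child hc (Sub.refl c)).size_le)⟩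
      · -- two children attain the max
        have hif : 2 ≤ ((ts.map HS).filter (fun v => v == m)).length := by
          by_contra hcon
          rw [if_neg hcon] at hHS
          omega
        have hxm1 : x = m + 1 := by
          rw [if_pos hif] at hHS; omega
        rw [List.filter_map] at hif
        rw [List.length_map] at hif
        obtain ⟨a, b, hab, ha, hb⟩ := filter_two_sublist ts _ hif
        simp only [Function.comp, beq_iff_eq] at ha hb
        have hasub : Sub a (node ts) :=
          Sub.child (hab.subset (by simp)) (Sub.refl a)
        have hbsub : Sub b (node ts) :=
          Sub.child (hab.subset (by simp)) (Sub.refl b)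
        refine ⟨a, b, hasub, hbsub, by omega, by omega, ?_⟩
        have hmap : List.Sublist [a.size, b.size] (ts.map size) := by
          have := hab.map size; simpa using this
        have := hmap.sum_le_sum (fun x _ => Nat.zero_le x)
        rw [size_node]
        simp at this
        omega
  intro T; exact main (sizeOf T) T le_rfl

end RTree
/-- if `HS(T) ≥ x` (`x ≥ 2`) for a tree of size `n`, then some rotation of
the preorder degree sequence of `T` starts with a complete tree of Horton-Strahler
number `≥ x - 2` and size `≤ n/4`. -/
theorem rotation_small_subtree (T : RTree) (n x : ℕ) (hn : T.size = n) (hx : 2 ≤ x)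
    (hHS : x ≤ T.HS) :
    ∃ j < n, ∃ t : RTree,
      RTree.degSeq t <+: (T.degSeq.rotate j) ∧ x - 2 ≤ t.HS ∧ 4 * t.size ≤ n := by
  classical
  obtain ⟨t1, t2, h1, h2, hh1, hh2, hsum⟩ := RTree.hs_split T x (by omega) hHS
  obtain ⟨u1, u2, g1, g2, gg1, gg2, gsum⟩ := RTree.hs_split t1 (x - 1) (by omega) hh1
  obtain ⟨u3, u4, g3, g4, gg3, gg4, gsum2⟩ := RTree.hs_split t2 (x - 1) (by omega) hh2
  have s1 : RTree.Sub u1 T := g1.trans' h1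
  have s2 : RTree.Sub u2 T := g2.trans' h1
  have s3 : RTree.Sub u3 T := g3.trans' h2
  have s4 : RTree.Sub u4 T := g4.trans' h2
  have htot : u1.size + u2.size + u3.size + u4.size ≤ n := by omega
  have hhs : x - 1 - 1 = x - 2 := by omega
  rw [hhs] at gg1 gg2 gg3 gg4
  have hone : 4 * u1.size ≤ n ∨ 4 * u2.size ≤ n ∨ 4 * u3.size ≤ n ∨ 4 * u4.size ≤ n := by
    omega
  obtain ⟨t, hts, hth, htn⟩ : ∃ t : RTree, RTree.Sub t T ∧ x - 2 ≤ t.HS ∧ 4 * t.size ≤ n := by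
    rcases hone with h | h | h | h
    exacts [⟨u1, s1, gg1, h⟩, ⟨u2, s2, gg2, h⟩, ⟨u3, s3, gg3, h⟩, ⟨u4, s4, gg4, h⟩]
  obtain ⟨A, B, hAB⟩ := hts.degSeq_infix
  refine ⟨A.length, ?_, t, ?_, hth, htn⟩
  · have hlen := RTree.length_degSeq T
    have hlt := RTree.length_degSeq t
    have hp := RTree.size_pos t
    rw [hAB] at hlen
    simp only [List.length_append] at hlen
    omega
  · have hA : A.length ≤ T.degSeq.length := by rw [hAB]; simp
    rw [List.rotate_eq_drop_append_take hA, hAB, List.append_assoc, List.drop_left,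
      List.take_left]
    exact ⟨B ++ A, by simp⟩
end
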